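/- arXiv:1305.0345 — 5 statements merged into one kernel-verified Lean document; each statement's English description precedes it below -/
import Mathlib

section
/- Let α := exp(2πi/5) and define Z : ℂ⁴ → ℂ by Z(r,d,s,t) := (α−1)·r + (1/6)·(−3α³+9α−16)·d + (α³+2α²+3α−1)·s − 5t, and T : ℂ⁴ → ℂ⁴ by T(r,d,s,t) := (r−χ, d+r, s+d+r/2, t+s+d/2+r/6) where χ := 5r + (20/3)d + 5s + 5t. Then for every v ∈ ℂ⁴ one has Z(T(v)) = α·Z(v); that is, Z is a left eigenvector of T with eigenvalue α = exp(2πi/5). -/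
open Complex

/-- `Z` is a left eigenvector of `T` with eigenvalue `α = exp(2πi/5)`. -/
theorem gepner_central_charge_eigenvector :
    let α : ℂ := Complex.exp (2 * Real.pi * Complex.I / 5)
    let Z : ℂ → ℂ → ℂ → ℂ → ℂ := fun r d s t =>
      (α - 1) * r + (1 / 6) * (-3 * α ^ 3 + 9 * α - 16) * d
        + (α ^ 3 + 2 * α ^ 2 + 3 * α - 1) * s - 5 * t
    ∀ r d s t : ℂ,
      Z (r - (5 * r + (20 / 3) * d + 5 * s + 5 * t)) (d + r) (s + d + r / 2)
          (t + s + d / 2 + r / 6)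
        = α * Z r d s t := by
  intro α Z r d s t
  have h5 : α ^ 5 = 1 := by
    show Complex.exp (2 * Real.pi * Complex.I / 5) ^ 5 = 1
    rw [← Complex.exp_nat_mul]
    have : ((5 : ℕ) : ℂ) * (2 * Real.pi * Complex.I / 5) = 2 * Real.pi * Complex.I := by
      push_cast; ring
    rw [this, Complex.exp_two_pi_mul_I]
  have hne : α ≠ 1 := by
    show Complex.exp (2 * Real.pi * Complex.I / 5) ≠ 1
    rw [Ne, Complex.exp_eq_one_iff]
    rintro ⟨n, hn⟩
    have hpi : (Real.pi : ℂ) ≠ 0 := by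
      exact_mod_cast Complex.ofReal_ne_zero.mpr Real.pi_ne_zero
    have hI : Complex.I ≠ 0 := Complex.I_ne_zero
    have h5n : (5 : ℂ) * n = 1 := by
      have h2 : ((5 : ℂ) * n - 1) * (2 * Real.pi * Complex.I) = 0 := by
        linear_combination (-5 : ℂ) * hn
      have h3 : (2 : ℂ) * Real.pi * Complex.I ≠ 0 := by
        simp [hpi, hI]
      have := (mul_eq_zero.mp h2).resolve_right h3
      linear_combination this
    have : ((5 * n : ℤ) : ℂ) = ((1 : ℤ) : ℂ) := by push_cast; linear_combination h5n
    have h1 : (5 * n : ℤ) = 1 := by exact_mod_cast this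
    omega
  have hsum : α ^ 4 + α ^ 3 + α ^ 2 + α + 1 = 0 := by
    have : (α - 1) * (α ^ 4 + α ^ 3 + α ^ 2 + α + 1) = 0 := by
      linear_combination h5
    exact (mul_eq_zero.mp this).resolve_left (sub_ne_zero.mpr hne)
  simp only [Z]
  linear_combination (d / 2 - s) * hsum
end

section
/- Define T : ℂ⁴ → ℂ⁴ by T(r,d,s,t) := (r−χ, d+r, s+d+r/2, t+s+d/2+r/6), where χ := 5r + (20/3)d + 5s + 5t. Then the characteristic polynomial of T is the 5th cyclotomic polynomial X⁴ + X³ + X² + X + 1; in particular the eigenvalues of T are exactly the primitive 5th roots of unity exp(2πik/5), k = 1, 2, 3, 4, each with multiplicity one. -/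
open Polynomial

set_option maxHeartbeats 1000000 in
private theorem det_fin_four_aux {R : Type*} [CommRing R] (M : Matrix (Fin 4) (Fin 4) R) :
    M.det =
      M 0 0 * (M 1 1 * (M 2 2 * M 3 3 - M 2 3 * M 3 2) - M 1 2 * (M 2 1 * M 3 3 - M 2 3 * M 3 1)
        + M 1 3 * (M 2 1 * M 3 2 - M 2 2 * M 3 1))
      - M 0 1 * (M 1 0 * (M 2 2 * M 3 3 - M 2 3 * M 3 2) - M 1 2 * (M 2 0 * M 3 3 - M 2 3 * M 3 0)
        + M 1 3 * (M 2 0 * M 3 2 - M 2 2 * M 3 0))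
      + M 0 2 * (M 1 0 * (M 2 1 * M 3 3 - M 2 3 * M 3 1) - M 1 1 * (M 2 0 * M 3 3 - M 2 3 * M 3 0)
        + M 1 3 * (M 2 0 * M 3 1 - M 2 1 * M 3 0))
      - M 0 3 * (M 1 0 * (M 2 1 * M 3 2 - M 2 2 * M 3 1) - M 1 1 * (M 2 0 * M 3 2 - M 2 2 * M 3 0)
        + M 1 2 * (M 2 0 * M 3 1 - M 2 1 * M 3 0)) := by
  rw [Matrix.det_succ_row_zero, Fin.sum_univ_four]
  simp only [Matrix.det_fin_three, Matrix.submatrix_apply]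
  norm_num [Fin.succAbove, Fin.lt_def, Fin.ext_iff, Fin.castSucc, Fin.castAdd, Fin.castLE,
    Fin.succ]
  simp only [show (⟨2, by norm_num⟩ : Fin 4) = 2 from rfl,
    show (⟨3, by norm_num⟩ : Fin 4) = 3 from rfl]
  norm_num [show ((3 : Fin 4) : ℕ) = 3 from rfl, Fin.lt_def]
  ring

private theorem cyc5_aux :
    Polynomial.cyclotomic 5 ℂ = X ^ 4 + X ^ 3 + X ^ 2 + X + 1 := by
  have : Fact (Nat.Prime 5) := ⟨by norm_num⟩
  rw [Polynomial.cyclotomic_prime]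
  simp [Finset.sum_range_succ]
  ring

private theorem natDegree_aux : (X ^ 4 + X ^ 3 + X ^ 2 + X + 1 : ℂ[X]).natDegree = 4 := by
  compute_degree!

private theorem ne_zero_aux : (X ^ 4 + X ^ 3 + X ^ 2 + X + 1 : ℂ[X]) ≠ 0 :=
  fun h => by simpa using congrArg (Polynomial.eval 0) h

private theorem roots_aux :
    (X ^ 4 + X ^ 3 + X ^ 2 + X + 1 : ℂ[X]).roots =
      {Complex.exp (2 * Real.pi * Complex.I * 1 / 5),
       Complex.exp (2 * Real.pi * Complex.I * 2 / 5),
       Complex.exp (2 * Real.pi * Complex.I * 3 / 5),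
       Complex.exp (2 * Real.pi * Complex.I * 4 / 5)} := by
  set P : ℂ[X] := X ^ 4 + X ^ 3 + X ^ 2 + X + 1 with hP
  have h5 : (5 : ℕ) ≠ 0 := by norm_num
  have hζ : IsPrimitiveRoot (Complex.exp (2 * ↑Real.pi * Complex.I / 5)) 5 :=
    Complex.isPrimitiveRoot_exp 5 h5
  set ζ := Complex.exp (2 * ↑Real.pi * Complex.I / 5) with hz
  have hpow : ∀ k : ℕ, Complex.exp (2 * ↑Real.pi * Complex.I * k / 5) = ζ ^ k := by
    intro k
    rw [hz, ← Complex.exp_nat_mul]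
    ring_nf
  have hroot : ∀ k : ℕ, k.Coprime 5 → (ζ ^ k) ∈ P.roots := by
    intro k hk
    rw [Polynomial.mem_roots (hP ▸ ne_zero_aux), hP, ← cyc5_aux,
      Polynomial.isRoot_cyclotomic_iff]
    exact hζ.pow_of_coprime k hk
  have hne : ∀ i j : ℕ, i < 5 → j < 5 → i ≠ j → ζ ^ i ≠ ζ ^ j :=
    fun i j hi hj hij h => hij (hζ.pow_inj hi hj h)
  have hnd : Multiset.Nodup ({ζ ^ 1, ζ ^ 2, ζ ^ 3, ζ ^ 4} : Multiset ℂ) := by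
    simp only [Multiset.insert_eq_cons, Multiset.nodup_cons, Multiset.mem_cons,
      Multiset.mem_singleton, Multiset.nodup_singleton, not_or]
    refine ⟨⟨?_, ?_, ?_⟩, ⟨?_, ?_⟩, ?_, trivial⟩ <;> apply hne <;> norm_num
  have hsub : ({ζ ^ 1, ζ ^ 2, ζ ^ 3, ζ ^ 4} : Multiset ℂ) ⊆ P.roots := by
    intro x hx
    simp only [Multiset.insert_eq_cons, Multiset.mem_cons, Multiset.mem_singleton] at hx
    rcases hx with rfl | rfl | rfl | rfl
    · exact hroot 1 (by norm_num)
    · exact hroot 2 (by norm_num)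
    · exact hroot 3 (by norm_num)
    · exact hroot 4 (by norm_num)
  have hle : ({ζ ^ 1, ζ ^ 2, ζ ^ 3, ζ ^ 4} : Multiset ℂ) ≤ P.roots :=
    (Multiset.le_iff_subset hnd).2 hsub
  have hcard : Multiset.card P.roots = 4 := by
    rw [Polynomial.splits_iff_card_roots.1 (IsAlgClosed.splits P), hP, natDegree_aux]
  have heq := Multiset.eq_of_le_of_card_le hle (by rw [hcard]; simp)
  rw [← heq]
  have e1 : Complex.exp (2 * ↑Real.pi * Complex.I * 1 / 5) = ζ ^ 1 := by rw [← hpow 1]; norm_num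
  have e2 : Complex.exp (2 * ↑Real.pi * Complex.I * 2 / 5) = ζ ^ 2 := by rw [← hpow 2]; norm_num
  have e3 : Complex.exp (2 * ↑Real.pi * Complex.I * 3 / 5) = ζ ^ 3 := by rw [← hpow 3]; norm_num
  have e4 : Complex.exp (2 * ↑Real.pi * Complex.I * 4 / 5) = ζ ^ 4 := by rw [← hpow 4]; norm_num
  rw [e1, e2, e3, e4]

set_option maxHeartbeats 1000000 in
/-- the characteristic polynomial of the matrix of `T` is
`X⁴ + X³ + X² + X + 1`, the 5th cyclotomic polynomial; in particular the
eigenvalues of `T` are exactly the primitive 5th roots of unity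
`exp(2πik/5)`, `k = 1, 2, 3, 4`, each with multiplicity one. -/
theorem charpoly_eq_cyclotomic_five :
    let M : Matrix (Fin 4) (Fin 4) ℂ :=
      !![-4, -20 / 3, -5, -5;
         1, 1, 0, 0;
         1 / 2, 1, 1, 0;
         1 / 6, 1 / 2, 1, 1]
    M.charpoly = X ^ 4 + X ^ 3 + X ^ 2 + X + 1 ∧
    M.charpoly = Polynomial.cyclotomic 5 ℂ ∧
    M.charpoly.roots =
      {Complex.exp (2 * Real.pi * Complex.I * 1 / 5),
       Complex.exp (2 * Real.pi * Complex.I * 2 / 5),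
       Complex.exp (2 * Real.pi * Complex.I * 3 / 5),
       Complex.exp (2 * Real.pi * Complex.I * 4 / 5)} := by
  intro M
  have h1 : M.charpoly = X ^ 4 + X ^ 3 + X ^ 2 + X + 1 := by
    have h : M.charmatrix =
        !![X - C (-4), -C (-20/3), -C (-5), -C (-5);
           -C 1, X - C 1, -C 0, -C 0;
           -C (1/2), -C 1, X - C 1, -C 0;
           -C (1/6), -C (1/2), -C 1, X - C 1] := by
      ext i j
      fin_cases i <;> fin_cases j <;>
        simp [Matrix.charmatrix_apply, M, Matrix.diagonal_apply, Matrix.one_apply,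
          Matrix.vecHead, Matrix.vecTail]
    rw [Matrix.charpoly, h, det_fin_four_aux]
    apply Polynomial.funext
    intro x
    simp [Matrix.vecHead, Matrix.vecTail]
    ring
  refine ⟨h1, ?_, ?_⟩
  · rw [h1, cyc5_aux]
  · rw [h1, roots_aux]
end

section
/- Let α := exp(2πi/5), let T : ℂ⁴ → ℂ⁴ be defined by T(r,d,s,t) := (r−χ, d+r, s+d+r/2, t+s+d/2+r/6) with χ := 5r + (20/3)d + 5s + 5t, and let Z : ℂ⁴ → ℂ be Z(r,d,s,t) := (α−1)·r + (1/6)·(−3α³+9α−16)·d + (α³+2α²+3α−1)·s − 5t. If W : ℂ⁴ → ℂ is any linear functional satisfying W(T(v)) = α·W(v) for all v ∈ ℂ⁴ and the normalization W(0,0,0,1) = −5, then W = Z. That is, Z is the unique α-eigenfunctional of T with ch₃-coefficient equal to −1. -/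
/-- `Z` is the unique `α`-eigenfunctional of `T` with
`ch₃`-coefficient equal to `−1`, i.e. with `W(0,0,0,1) = −5`. -/
theorem gepner_central_charge_unique :
    let α : ℂ := Complex.exp (2 * Real.pi * Complex.I / 5)
    let T : ℂ × ℂ × ℂ × ℂ → ℂ × ℂ × ℂ × ℂ := fun p =>
      (p.1 - (5 * p.1 + (20 / 3) * p.2.1 + 5 * p.2.2.1 + 5 * p.2.2.2),
        p.2.1 + p.1,
        p.2.2.1 + p.2.1 + p.1 / 2,
        p.2.2.2 + p.2.2.1 + p.2.1 / 2 + p.1 / 6)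
    let Z : ℂ → ℂ → ℂ → ℂ → ℂ := fun r d s t =>
      (α - 1) * r + (1 / 6) * (-3 * α ^ 3 + 9 * α - 16) * d
        + (α ^ 3 + 2 * α ^ 2 + 3 * α - 1) * s - 5 * t
    ∀ W : (ℂ × ℂ × ℂ × ℂ) →ₗ[ℂ] ℂ,
      (∀ v : ℂ × ℂ × ℂ × ℂ, W (T v) = α * W v) →
      W (0, 0, 0, 1) = -5 →
      ∀ r d s t : ℂ, W (r, d, s, t) = Z r d s t := by
  intro α T Z W hW hnorm r d s t
  have h2πI : (2 * (Real.pi : ℂ) * Complex.I : ℂ) ≠ 0 := by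
    simp [Real.pi_ne_zero, Complex.I_ne_zero]
  have h5 : α ^ 5 = 1 := by
    show Complex.exp (2 * Real.pi * Complex.I / 5) ^ 5 = 1
    rw [← Complex.exp_nat_mul]
    rw [show (5 : ℕ) * (2 * (Real.pi:ℂ) * Complex.I / 5) = 2 * Real.pi * Complex.I by push_cast; ring]
    exact Complex.exp_two_pi_mul_I
  have hne : α ≠ 1 := by
    show Complex.exp (2 * Real.pi * Complex.I / 5) ≠ 1
    intro h
    rw [Complex.exp_eq_one_iff] at h
    obtain ⟨n, hn⟩ := h
    have h1 : ((5 * n : ℤ) : ℂ) * (2 * Real.pi * Complex.I) = 1 * (2 * Real.pi * Complex.I) := by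
      push_cast
      linear_combination (-5 : ℂ) * hn
    have h2' : ((5 * n : ℤ) : ℂ) = ((1 : ℤ) : ℂ) := by
      have := mul_right_cancel₀ h2πI h1
      exact_mod_cast this
    have : (5 * n : ℤ) = 1 := by exact_mod_cast h2'
    omega
  have hone : (1 : ℂ) - α ≠ 0 := sub_ne_zero.mpr (Ne.symm hne)
  have hmin : α ^ 4 + α ^ 3 + α ^ 2 + α + 1 = 0 := by
    have hfac : (α - 1) * (α ^ 4 + α ^ 3 + α ^ 2 + α + 1) = 0 := by
      linear_combination h5
    rcases mul_eq_zero.mp hfac with h | h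
    · exact absurd (sub_eq_zero.mp h) hne
    · exact h
  set a := W (1, 0, 0, 0) with ha
  set b := W (0, 1, 0, 0) with hb
  set c := W (0, 0, 1, 0) with hc
  set e := W (0, 0, 0, 1) with he
  have hdec : ∀ r d s t : ℂ, W (r, d, s, t) = r * a + d * b + s * c + t * e := by
    intro r d s t
    have hv : (r, d, s, t) = r • ((1:ℂ), (0:ℂ), (0:ℂ), (0:ℂ)) + d • (0, 1, 0, 0)
        + s • (0, 0, 1, 0) + t • (0, 0, 0, 1) := by
      simp [Prod.ext_iff]
    rw [hv, map_add, map_add, map_add, map_smul, map_smul, map_smul, map_smul,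
      smul_eq_mul, smul_eq_mul, smul_eq_mul, smul_eq_mul, ← ha, ← hb, ← hc, ← he]
  have key : ∀ v : ℂ × ℂ × ℂ × ℂ,
      (v.1 - (5 * v.1 + (20 / 3) * v.2.1 + 5 * v.2.2.1 + 5 * v.2.2.2)) * a
        + (v.2.1 + v.1) * b + (v.2.2.1 + v.2.1 + v.1 / 2) * c
        + (v.2.2.2 + v.2.2.1 + v.2.1 / 2 + v.1 / 6) * e
      = α * (v.1 * a + v.2.1 * b + v.2.2.1 * c + v.2.2.2 * e) := by
    intro v
    have h : W (v.1 - (5 * v.1 + (20 / 3) * v.2.1 + 5 * v.2.2.1 + 5 * v.2.2.2),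
        v.2.1 + v.1, v.2.2.1 + v.2.1 + v.1 / 2,
        v.2.2.2 + v.2.2.1 + v.2.1 / 2 + v.1 / 6)
        = α * W (v.1, v.2.1, v.2.2.1, v.2.2.2) := hW v
    rw [hdec, hdec] at h
    exact h
  have h4 := key (0, 0, 0, 1)
  have h3 := key (0, 0, 1, 0)
  have h2 := key (0, 1, 0, 0)
  norm_num at h4 h3 h2
  have hea : e = -5 := hnorm
  have haa : a = α - 1 := by
    have h0 : (-5 : ℂ) * (a - (α - 1)) = 0 := by
      rw [hea] at h4; linear_combination h4
    rcases mul_eq_zero.mp h0 with h | h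
    · norm_num at h
    · linear_combination h
  have hca : c = α ^ 3 + 2 * α ^ 2 + 3 * α - 1 := by
    rw [haa, hea] at h3
    have h0 : (1 - α) * (c - (α ^ 3 + 2 * α ^ 2 + 3 * α - 1)) = 0 := by
      linear_combination h3 + hmin
    rcases mul_eq_zero.mp h0 with h | h
    · exact absurd h hone
    · linear_combination h
  have hba : b = (1 / 6) * (-3 * α ^ 3 + 9 * α - 16) := by
    rw [haa, hca, hea] at h2
    have h0 : (1 - α) * (b - (1 / 6) * (-3 * α ^ 3 + 9 * α - 16)) = 0 := by
      linear_combination h2 - (1 / 2) * hmin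
    rcases mul_eq_zero.mp h0 with h | h
    · exact absurd h hone
    · linear_combination h
  rw [hdec r d s t, haa, hba, hca, hea]
  show _ = (α - 1) * r + (1 / 6) * (-3 * α ^ 3 + 9 * α - 16) * d
        + (α ^ 3 + 2 * α ^ 2 + 3 * α - 1) * s - 5 * t
  ring
end

section
/- Let α := exp(2πi/5), β_b := (1/5)α³ + (2/5)α² + (3/5)α + 3/10 and β_c := (3/8)α³ + (1/4)α² + (5/8)α + 5/16. Then β_b ≠ 0 and 2·β_c/β_b = (15 − 4√5)/4. In particular, writing β_b = ib and β_c = ic with b, c positive reals, the constant 2c/b appearing in the strong Bogomolov–Gieseker conjecture equals (15 − 4√5)/4 = 1.5139..., an element of ℚ(√5) ⊂ ℚ(exp(2πi/5)). -/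
/-- `β_b ≠ 0` and `2β_c/β_b = (15 − 4√5)/4`, the constant
in the strong Bogomolov–Gieseker conjecture. -/
theorem two_c_div_b_eq :
    let α : ℂ := Complex.exp (2 * Real.pi * Complex.I / 5)
    let βb : ℂ := (1 / 5) * α ^ 3 + (2 / 5) * α ^ 2 + (3 / 5) * α + 3 / 10
    let βc : ℂ := (3 / 8) * α ^ 3 + (1 / 4) * α ^ 2 + (5 / 8) * α + 5 / 16
    βb ≠ 0 ∧ 2 * βc / βb = (((15 - 4 * Real.sqrt 5) / 4 : ℝ) : ℂ) := by
  intro α βb βc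
  set s : ℝ := Real.sqrt 5 with hs_def
  have hs2 : s ^ 2 = 5 := Real.sq_sqrt (by norm_num)
  have hs : (s : ℂ) ^ 2 = 5 := by exact_mod_cast congrArg (Complex.ofReal) hs2
  have hθ : (2 * Real.pi * Complex.I / 5 : ℂ) = ((2 * Real.pi / 5 : ℝ) : ℂ) * Complex.I := by
    push_cast; ring
  -- α = cos θ + sin θ * I
  have hα : α = (Real.cos (2 * Real.pi / 5) : ℂ) + (Real.sin (2 * Real.pi / 5) : ℂ) * Complex.I := by
    show Complex.exp _ = _
    rw [hθ, Complex.exp_mul_I]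
    norm_cast
  -- cos(2π/5) = (√5 − 1)/4
  have hcos : Real.cos (2 * Real.pi / 5) = (s - 1) / 4 := by
    have h2 : (2 : ℝ) * Real.pi / 5 = 2 * (Real.pi / 5) := by ring
    rw [h2, Real.cos_two_mul, Real.cos_pi_div_five]
    nlinarith [hs2]
  -- the quadratic relation α² + 1 = ((√5−1)/2) α
  have hpy : Real.sin (2 * Real.pi / 5) ^ 2 = 1 - ((s - 1) / 4) ^ 2 := by
    nlinarith [Real.sin_sq_add_cos_sq (2 * Real.pi / 5), hcos]
  have hpyC : ((Real.sin (2 * Real.pi / 5) : ℂ)) ^ 2 = 1 - (((s : ℂ) - 1) / 4) ^ 2 := by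
    exact_mod_cast congrArg (Complex.ofReal) hpy
  have hc4 : (((s - 1) / 4 : ℝ) : ℂ) = ((s : ℂ) - 1) / 4 := by push_cast; ring
  have hq : α ^ 2 + 1 = (((s : ℂ) - 1) / 2) * α := by
    rw [hα, hcos, hc4]
    linear_combination ((Real.sin (2 * Real.pi / 5) : ℂ)) ^ 2 * Complex.I_sq - hpyC
      + (Complex.I ^ 2 + 1) * hpyC * 0
  -- βb = ((s+5)α − s)/10 and 2βc = ((11−s)α + 4 − 3s)/8
  have hb : βb = (((s : ℂ) + 5) * α - s) / 10 := by
    show (1 / 5) * α ^ 3 + (2 / 5) * α ^ 2 + (3 / 5) * α + 3 / 10 = _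
    linear_combination ((1 / 5) * α + ((s : ℂ) + 3) / 10) * hq + (α / 20) * hs
  have hc : 2 * βc = (((11 : ℂ) - s) * α + 4 - 3 * s) / 8 := by
    show 2 * ((3 / 8) * α ^ 3 + (1 / 4) * α ^ 2 + (5 / 8) * α + 5 / 16) = _
    linear_combination ((3 / 4) * α + (3 * (s : ℂ) + 1) / 8) * hq + (3 * α / 16) * hs
  -- βb ≠ 0 since Im α = sin(2π/5) > 0
  have hsin : 0 < Real.sin (2 * Real.pi / 5) := by
    apply Real.sin_pos_of_pos_of_lt_pi
    · positivity
    · nlinarith [Real.pi_pos]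
  have hsge : 0 ≤ s := Real.sqrt_nonneg 5
  have him : α.im = Real.sin (2 * Real.pi / 5) := by
    rw [hα]
    simp only [Complex.add_im, Complex.ofReal_im, Complex.mul_im, Complex.ofReal_re,
      Complex.I_im, Complex.I_re, mul_one, mul_zero, add_zero, zero_add]
  have hbne : βb ≠ 0 := by
    rw [hb]
    intro h
    have h0 : ((s : ℂ) + 5) * α - s = 0 := by
      have := congrArg (· * (10 : ℂ)) h
      simpa [div_mul_cancel₀] using this
    have h1 := congrArg Complex.im h0
    simp [Complex.mul_im, him] at h1
    rcases h1 with h1 | h1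
    · linarith
    · linarith
  refine ⟨hbne, ?_⟩
  rw [div_eq_iff hbne, hb, hc]
  push_cast
  linear_combination ((α - 1) / 10) * hs
end

section
/- Let α := exp(2πi/5), let Z : ℂ⁴ → ℂ be Z(r,d,s,t) := (α−1)·r + (1/6)·(−3α³+9α−16)·d + (α³+2α²+3α−1)·s − 5t, and let b := Im((1/5)α³ + (2/5)α² + (3/5)α + 3/10) and c := Im((3/8)α³ + (1/4)α² + (5/8)α + 5/16). Then for all real r > 0 and all real s, t, the imaginary part of Z at the point (r, −r/2, s, t) equals 5b·s + (c − 5b/8)·r, and the following equivalence holds: Im Z(r, −r/2, s, t) < 0 if and only if (5·(r/2)² − 10·r·s)/r² > (15 − 4√5)/4. (That is, for a sheaf E on a quintic 3-fold with ch(E) = (r, −(r/2)H, sH², tH³), the strong Bogomolov–Gieseker inequality Δ(E)·H/r² > 2c/b is equivalent to the strict negativity of Im Z_G^†(E).) -/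
set_option maxHeartbeats 1000000


/-- for `r > 0` real and `s, t` real, the imaginary part of the
Gepner central charge at `(r, −r/2, s, t)` equals `5b·s + (c − 5b/8)·r`, and its
strict negativity is equivalent to the strong Bogomolov–Gieseker inequality
`(5(r/2)² − 10rs)/r² > (15 − 4√5)/4`. -/
theorem strong_BG_iff_negative_imaginary_part :
    let α : ℂ := Complex.exp (2 * Real.pi * Complex.I / 5)
    let Z : ℂ → ℂ → ℂ → ℂ → ℂ := fun r d s t =>
      (α - 1) * r + (1 / 6) * (-3 * α ^ 3 + 9 * α - 16) * d
        + (α ^ 3 + 2 * α ^ 2 + 3 * α - 1) * s - 5 * t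
    let b : ℝ := ((1 / 5) * α ^ 3 + (2 / 5) * α ^ 2 + (3 / 5) * α + 3 / 10).im
    let c : ℝ := ((3 / 8) * α ^ 3 + (1 / 4) * α ^ 2 + (5 / 8) * α + 5 / 16).im
    ∀ r s t : ℝ, 0 < r →
      (Z (r : ℂ) (-(r : ℂ) / 2) (s : ℂ) (t : ℂ)).im = 5 * b * s + (c - 5 * b / 8) * r ∧
      ((Z (r : ℂ) (-(r : ℂ) / 2) (s : ℂ) (t : ℂ)).im < 0 ↔
        (5 * (r / 2) ^ 2 - 10 * r * s) / r ^ 2 > (15 - 4 * Real.sqrt 5) / 4) := by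
  intro α Z b c r s t hr
  -- imaginary parts of powers of α
  have hpow : ∀ n : ℕ, (α ^ n).im = Real.sin (n * (2 * Real.pi / 5)) := by
    intro n
    show (Complex.exp (2 * Real.pi * Complex.I / 5) ^ n).im = _
    rw [← Complex.exp_nat_mul]
    have : (n : ℂ) * (2 * Real.pi * Complex.I / 5)
        = ((n * (2 * Real.pi / 5) : ℝ) : ℂ) * Complex.I := by push_cast; ring
    rw [this, Complex.exp_ofReal_mul_I_im]
  set S : ℝ := Real.sin (Real.pi / 5) with hS
  set C : ℝ := Real.cos (Real.pi / 5) with hC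
  have ha1 : α.im = 2 * S * C := by
    have := hpow 1
    rw [pow_one] at this
    rw [this]
    rw [show (1 : ℕ) * (2 * Real.pi / 5) = 2 * (Real.pi / 5) by push_cast; ring,
      Real.sin_two_mul]
  have ha2 : (α ^ 2).im = S := by
    rw [hpow 2, show (2 : ℕ) * (2 * Real.pi / 5) = Real.pi - Real.pi / 5 by push_cast; ring,
      Real.sin_pi_sub]
  have ha3 : (α ^ 3).im = -S := by
    rw [hpow 3, show (3 : ℕ) * (2 * Real.pi / 5) = Real.pi + Real.pi / 5 by push_cast; ring,
      Real.sin_add]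
    simp
    exact hS.symm
  -- Im Z in terms of the imaginary parts of powers of α
  have him : (Z (r : ℂ) (-(r : ℂ) / 2) (s : ℂ) (t : ℂ)).im
      = α.im * r + (1 / 6) * (-3 * (α ^ 3).im + 9 * α.im) * (-r / 2)
        + ((α ^ 3).im + 2 * (α ^ 2).im + 3 * α.im) * s := by
    show ((α - 1) * (r : ℂ) + (1 / 6) * (-3 * α ^ 3 + 9 * α - 16) * (-(r : ℂ) / 2)
        + (α ^ 3 + 2 * α ^ 2 + 3 * α - 1) * (s : ℂ) - 5 * (t : ℂ)).im = _
    have h2 : -(r : ℂ) / 2 = ((-r / 2 : ℝ) : ℂ) := by push_cast; ring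
    have h6 : (1 / 6 : ℂ) = ((1 / 6 : ℝ) : ℂ) := by push_cast; ring
    rw [h2, h6]
    simp [Complex.add_im, Complex.sub_im, Complex.mul_im, Complex.mul_re,
      Complex.ofReal_re, Complex.ofReal_im, Complex.one_im, Complex.one_re]
  have hb : b = (1 / 5) * (α ^ 3).im + (2 / 5) * (α ^ 2).im + (3 / 5) * α.im := by
    show ((1 / 5 : ℂ) * α ^ 3 + (2 / 5 : ℂ) * α ^ 2 + (3 / 5 : ℂ) * α + 3 / 10).im = _
    have e1 : (1 / 5 : ℂ) = ((1 / 5 : ℝ) : ℂ) := by push_cast; ring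
    have e2 : (2 / 5 : ℂ) = ((2 / 5 : ℝ) : ℂ) := by push_cast; ring
    have e3 : (3 / 5 : ℂ) = ((3 / 5 : ℝ) : ℂ) := by push_cast; ring
    have e4 : (3 / 10 : ℂ) = ((3 / 10 : ℝ) : ℂ) := by push_cast; ring
    rw [e1, e2, e3, e4]
    simp [Complex.add_im, Complex.mul_im, Complex.mul_re,
      Complex.ofReal_re, Complex.ofReal_im]
  have hc : c = (3 / 8) * (α ^ 3).im + (1 / 4) * (α ^ 2).im + (5 / 8) * α.im := by
    show ((3 / 8 : ℂ) * α ^ 3 + (1 / 4 : ℂ) * α ^ 2 + (5 / 8 : ℂ) * α + 5 / 16).im = _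
    have e1 : (3 / 8 : ℂ) = ((3 / 8 : ℝ) : ℂ) := by push_cast; ring
    have e2 : (1 / 4 : ℂ) = ((1 / 4 : ℝ) : ℂ) := by push_cast; ring
    have e3 : (5 / 8 : ℂ) = ((5 / 8 : ℝ) : ℂ) := by push_cast; ring
    have e4 : (5 / 16 : ℂ) = ((5 / 16 : ℝ) : ℂ) := by push_cast; ring
    rw [e1, e2, e3, e4]
    simp [Complex.add_im, Complex.mul_im, Complex.mul_re,
      Complex.ofReal_re, Complex.ofReal_im]
  constructor
  · rw [him, hb, hc]; ring
  · -- now use explicit trig values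
    rw [him, ha1, ha2, ha3]
    have hCval : C = (1 + Real.sqrt 5) / 4 := Real.cos_pi_div_five
    set v : ℝ := Real.sqrt 5 with hv
    have hv0 : 0 ≤ v := Real.sqrt_nonneg 5
    have hv2 : v ^ 2 = 5 := Real.sq_sqrt (by norm_num)
    have hvgt : 2 < v := by nlinarith
    have hSpos : 0 < S := Real.sin_pos_of_pos_of_lt_pi
      (by positivity) (by linarith [Real.pi_pos])
    have hr2 : (0 : ℝ) < r ^ 2 := by positivity
    rw [gt_iff_lt, lt_div_iff₀ hr2, hCval]
    have h35 : (0:ℝ) < 3 * v - 5 := by linarith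
    have hsr : v ^ 2 * (s * r) = 5 * (s * r) := by rw [hv2]
    have hrr : v ^ 2 * (r * r) = 5 * (r * r) := by rw [hv2]
    constructor
    · intro h
      have hE : (5 + 3 * v) / 2 * s + (v - 1) / 8 * r < 0 := by
        by_contra h'
        push_neg at h'
        nlinarith [mul_nonneg hSpos.le h']
      have key := mul_lt_mul_of_pos_left (mul_lt_mul_of_pos_right hE hr) h35
      nlinarith [key, hsr, hrr]
    · intro h
      have hE8 : ((5 + 3 * v) / 2 * s + (v - 1) / 8 * r) * (8 * r) < 0 := by
        have key := mul_lt_mul_of_pos_left h (by linarith : (0:ℝ) < 5 + 3 * v)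
        linarith [key, hsr, hrr]
      have hE : (5 + 3 * v) / 2 * s + (v - 1) / 8 * r < 0 := by
        by_contra h'
        push_neg at h'
        linarith [mul_nonneg h' (by linarith : (0:ℝ) ≤ 8 * r), hE8]
      linarith [mul_neg_of_pos_of_neg hSpos hE]
end
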